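/- arXiv:1809.01218 — 3 statements merged into one kernel-verified Lean document; each statement's English description precedes it below -/
import Mathlib

section
/- Let g = (g_1, ..., g_l) be polynomials in x ∈ ℝ^n and let G(x) be the (n+l)×l matrix polynomial whose i-th column is the vector (∇g_i(x); g_i(x)·e_i), i.e. the first n rows of G(x) are the gradients ∇g_1(x), ..., ∇g_l(x) and the last l rows form the diagonal matrix diag(g_1(x), ..., g_l(x)). Suppose there is an l×(n+l) matrix polynomial G_1(x) such that G_1(x)G(x) = I_l for all x. If at a point x* ∈ ℝ^n a vector λ ∈ ℝ^l and a vector v ∈ ℝ^n satisfy v = λ_1∇g_1(x*) + ... + λ_l∇g_l(x*) and λ_i·g_i(x*) = 0 for every i = 1, ..., l, then λ = G_1(x*)_{:,1:n}·v, i.e. each λ_i equals the product of the i-th row of the submatrix of G_1(x*) consisting of its first n columns with the vector v. -/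
open MvPolynomial

/-- The matrix `G(x)`: its `i`-th column is `(∇g_i(x); g_i(x)·e_i)`, i.e. the first `n`
rows are the gradients `∇g_1(x), ..., ∇g_l(x)` and the last `l` rows form
`diag(g_1(x), ..., g_l(x))`. -/
noncomputable def Gmat {n l : ℕ} (g : Fin l → MvPolynomial (Fin n) ℝ) (x : Fin n → ℝ) :
    Matrix (Fin n ⊕ Fin l) (Fin l) ℝ :=
  Matrix.of fun r c =>
    match r with
    | Sum.inl i => eval x (pderiv i (g c))
    | Sum.inr i => if i = c then eval x (g c) else 0

/-- If `G₁(x) G(x) = I_l` for all `x`, and at a point `x*` a vector `λ` and a vector `v`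
satisfy `v = Σ λ_i ∇g_i(x*)` and `λ_i g_i(x*) = 0` for all `i`, then
`λ = G₁(x*)_{:,1:n} v`. -/
theorem stmt0 {n l : ℕ} (g : Fin l → MvPolynomial (Fin n) ℝ)
    (G1 : Matrix (Fin l) (Fin n ⊕ Fin l) (MvPolynomial (Fin n) ℝ))
    (hG1 : ∀ x : Fin n → ℝ, (Matrix.of fun i j => eval x (G1 i j)) * Gmat g x = 1)
    (xstar : Fin n → ℝ) (lam : Fin l → ℝ) (v : Fin n → ℝ)
    (hv : ∀ j : Fin n, v j = ∑ i, lam i * eval xstar (pderiv j (g i)))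
    (hcomp : ∀ i, lam i * eval xstar (g i) = 0) :
    ∀ i, lam i = ∑ j : Fin n, eval xstar (G1 i (Sum.inl j)) * v j := by
  intro i
  have h := hG1 xstar
  have key : ∀ k, (if i = k then (1:ℝ) else 0) =
      ∑ r : Fin n ⊕ Fin l, eval xstar (G1 i r) * Gmat g xstar r k := by
    intro k
    have := congrFun (congrFun h i) k
    simpa [Matrix.mul_apply, Matrix.one_apply] using this.symm
  calc lam i = ∑ k, (if i = k then (1:ℝ) else 0) * lam k := by
        simp
    _ = ∑ k, (∑ r : Fin n ⊕ Fin l, eval xstar (G1 i r) * Gmat g xstar r k) * lam k := by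
        simp_rw [key]
    _ = ∑ r : Fin n ⊕ Fin l, eval xstar (G1 i r) * ∑ k, Gmat g xstar r k * lam k := by
        simp_rw [Finset.sum_mul, mul_assoc]
        rw [Finset.sum_comm]
        simp_rw [Finset.mul_sum]
    _ = ∑ j : Fin n, eval xstar (G1 i (Sum.inl j)) * v j := by
        rw [Fintype.sum_sum_type]
        have h1 : ∀ j : Fin n, ∑ k, Gmat g xstar (Sum.inl j) k * lam k = v j := by
          intro j
          rw [hv j]
          simp [Gmat, mul_comm]
        have h2 : ∀ i' : Fin l, ∑ k, Gmat g xstar (Sum.inr i') k * lam k = 0 := by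
          intro i'
          have : ∑ k, Gmat g xstar (Sum.inr i') k * lam k
              = eval xstar (g i') * lam i' := by
            simp [Gmat]
          rw [this, mul_comm, hcomp i']
        simp [h1, h2]
end

section
/- Let X = {x ∈ ℝ^n : g_i(x) = 0 (i ∈ E1X), g_i(x) ≥ 0 (i ∈ E2X)} and Y = {y ∈ ℝ^m : h_j(y) = 0 (j ∈ E1Y), h_j(y) ≥ 0 (j ∈ E2Y)}, where g = (g_1,...,g_{l1}) and h = (h_1,...,h_{l2}) are polynomial tuples. Suppose there are matrix polynomials G_1(x), H_1(y) with G_1(x)G(x) = I_{l1} for all x and H_1(y)H(y) = I_{l2} for all y, and define the Lagrange polynomial tuples λ(x,y) := G_1(x)_{:,1:n} ∇_x F(x,y) and μ(x,y) := H_1(y)_{:,1:m} ∇_y F(x,y). If (x*, y*) is a saddle point of F over X×Y and there exist vectors λ ∈ ℝ^{l1}, μ ∈ ℝ^{l2} satisfying the first-order conditions ∇_x F(x*,y*) = Σ_{i} λ_i ∇g_i(x*) with λ_i ≥ 0 and λ_i g_i(x*) = 0 for i ∈ E2X, and ∇_y F(x*,y*) = Σ_{j} μ_j ∇h_j(y*)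 with μ_j ≤ 0 and μ_j h_j(y*) = 0 for j ∈ E2Y, then λ = λ(x*,y*), μ = μ(x*,y*), and (x*,y*) solves the polynomial system: g_i(x*) = 0 (i ∈ E1X), h_j(y*) = 0 (j ∈ E1Y), ∇_x F(x*,y*) = Σ_i λ_i(x*,y*)∇g_i(x*), ∇_y F(x*,y*) = Σ_j μ_j(x*,y*)∇h_j(y*), 0 ≤ λ_i(x*,y*) ⊥ g_i(x*) ≥ 0 (i ∈ E2X), 0 ≥ μ_j(x*,y*) ⊥ h_j(y*) ≥ 0 (j ∈ E2Y). -/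
open MvPolynomial

/-- The semialgebraic set `{x : gᵢ(x) = 0 (i ∈ E1), gᵢ(x) ≥ 0 (i ∈ E2)}`. -/
def SemiSet {n l : ℕ} (E1 E2 : Finset (Fin l)) (g : Fin l → MvPolynomial (Fin n) ℝ) :
    Set (Fin n → ℝ) :=
  {x | (∀ i ∈ E1, eval x (g i) = 0) ∧ ∀ i ∈ E2, 0 ≤ eval x (g i)}

/-- The Lagrange polynomial tuple `λ(x,y) := G₁(x)_{:,1:n} ∇ₓ F(x,y)`. -/
noncomputable def lagX {n m l1 : ℕ} (G1 : Matrix (Fin l1) (Fin n ⊕ Fin l1) (MvPolynomial (Fin n) ℝ))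
    (F : MvPolynomial (Fin n ⊕ Fin m) ℝ) (i : Fin l1) : MvPolynomial (Fin n ⊕ Fin m) ℝ :=
  ∑ j : Fin n, rename Sum.inl (G1 i (Sum.inl j)) * pderiv (Sum.inl j) F

/-- The Lagrange polynomial tuple `μ(x,y) := H₁(y)_{:,1:m} ∇_y F(x,y)`. -/
noncomputable def lagY {n m l2 : ℕ} (H1 : Matrix (Fin l2) (Fin m ⊕ Fin l2) (MvPolynomial (Fin m) ℝ))
    (F : MvPolynomial (Fin n ⊕ Fin m) ℝ) (j : Fin l2) : MvPolynomial (Fin n ⊕ Fin m) ℝ :=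
  ∑ j' : Fin m, rename Sum.inr (H1 j (Sum.inl j')) * pderiv (Sum.inr j') F

/-- At a saddle point `(x*, y*)` admitting first-order Lagrange multipliers `λ, μ`,
the multipliers are given by the Lagrange polynomials, `λ = λ(x*,y*)` and
`μ = μ(x*,y*)`, and `(x*, y*)` solves the polynomial system (1.13). -/
theorem stmt1 {n m l1 l2 : ℕ}
    (E1X E2X : Finset (Fin l1)) (hXu : E1X ∪ E2X = Finset.univ) (hXd : Disjoint E1X E2X)
    (E1Y E2Y : Finset (Fin l2)) (hYu : E1Y ∪ E2Y = Finset.univ) (hYd : Disjoint E1Y E2Y)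
    (g : Fin l1 → MvPolynomial (Fin n) ℝ) (h : Fin l2 → MvPolynomial (Fin m) ℝ)
    (F : MvPolynomial (Fin n ⊕ Fin m) ℝ)
    (G1 : Matrix (Fin l1) (Fin n ⊕ Fin l1) (MvPolynomial (Fin n) ℝ))
    (H1 : Matrix (Fin l2) (Fin m ⊕ Fin l2) (MvPolynomial (Fin m) ℝ))
    (hG1 : ∀ x : Fin n → ℝ, (Matrix.of fun i j => eval x (G1 i j)) * Gmat g x = 1)
    (hH1 : ∀ y : Fin m → ℝ, (Matrix.of fun i j => eval y (H1 i j)) * Gmat h y = 1)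
    (xs : Fin n → ℝ) (ys : Fin m → ℝ)
    (hxX : xs ∈ SemiSet E1X E2X g) (hyY : ys ∈ SemiSet E1Y E2Y h)
    -- `(x*, y*)` is a saddle point of `F` over `X × Y`
    (hsaddle : (∀ x ∈ SemiSet E1X E2X g, eval (Sum.elim xs ys) F ≤ eval (Sum.elim x ys) F) ∧
      ∀ y ∈ SemiSet E1Y E2Y h, eval (Sum.elim xs y) F ≤ eval (Sum.elim xs ys) F)
    (lam : Fin l1 → ℝ) (mu : Fin l2 → ℝ)
    -- first-order conditions: `∇ₓF(x*,y*) = Σᵢ λᵢ ∇gᵢ(x*)`, `0 ≤ λᵢ ⊥ gᵢ(x*)` on E2X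
    (hlg : ∀ j : Fin n, eval (Sum.elim xs ys) (pderiv (Sum.inl j) F) =
      ∑ i, lam i * eval xs (pderiv j (g i)))
    (hlc : ∀ i ∈ E2X, 0 ≤ lam i ∧ lam i * eval xs (g i) = 0)
    -- `∇_yF(x*,y*) = Σⱼ μⱼ ∇hⱼ(y*)`, `0 ≥ μⱼ ⊥ hⱼ(y*)` on E2Y
    (hmg : ∀ j' : Fin m, eval (Sum.elim xs ys) (pderiv (Sum.inr j') F) =
      ∑ j, mu j * eval ys (pderiv j' (h j)))
    (hmc : ∀ j ∈ E2Y, mu j ≤ 0 ∧ mu j * eval ys (h j) = 0) :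
    (∀ i, lam i = eval (Sum.elim xs ys) (lagX G1 F i)) ∧
    (∀ j, mu j = eval (Sum.elim xs ys) (lagY H1 F j)) ∧
    (∀ i ∈ E1X, eval xs (g i) = 0) ∧ (∀ j ∈ E1Y, eval ys (h j) = 0) ∧
    (∀ j : Fin n, eval (Sum.elim xs ys) (pderiv (Sum.inl j) F) =
      ∑ i, eval (Sum.elim xs ys) (lagX G1 F i) * eval xs (pderiv j (g i))) ∧
    (∀ j' : Fin m, eval (Sum.elim xs ys) (pderiv (Sum.inr j') F) =
      ∑ j, eval (Sum.elim xs ys) (lagY H1 F j) * eval ys (pderiv j' (h j))) ∧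
    (∀ i ∈ E2X, 0 ≤ eval (Sum.elim xs ys) (lagX G1 F i) ∧
      eval (Sum.elim xs ys) (lagX G1 F i) * eval xs (g i) = 0 ∧ 0 ≤ eval xs (g i)) ∧
    (∀ j ∈ E2Y, eval (Sum.elim xs ys) (lagY H1 F j) ≤ 0 ∧
      eval (Sum.elim xs ys) (lagY H1 F j) * eval ys (h j) = 0 ∧ 0 ≤ eval ys (h j)) := by
  have hlamg : ∀ i, lam i * eval xs (g i) = 0 := by
    intro i
    have hi : i ∈ E1X ∪ E2X := hXu ▸ Finset.mem_univ i
    rcases Finset.mem_union.mp hi with h1 | h2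
    · rw [hxX.1 i h1, mul_zero]
    · exact (hlc i h2).2
  have hmuh : ∀ j, mu j * eval ys (h j) = 0 := by
    intro j
    have hj : j ∈ E1Y ∪ E2Y := hYu ▸ Finset.mem_univ j
    rcases Finset.mem_union.mp hj with h1 | h2
    · rw [hyY.1 j h1, mul_zero]
    · exact (hmc j h2).2
  have hwX : (Gmat g xs).mulVec lam =
      Sum.elim (fun j => eval (Sum.elim xs ys) (pderiv (Sum.inl j) F)) (fun _ => 0) := by
    funext r
    cases r with
    | inl j =>
      simp only [Matrix.mulVec, dotProduct, Gmat, Matrix.of_apply, Sum.elim_inl, hlg j]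
      exact Finset.sum_congr rfl fun i _ => mul_comm _ _
    | inr i' =>
      simp only [Matrix.mulVec, dotProduct, Gmat, Matrix.of_apply, Sum.elim_inr]
      rw [Finset.sum_eq_single i']
      · simpa [mul_comm] using hlamg i'
      · intro b _ hb
        simp [Ne.symm hb]
      · simp
  have hwY : (Gmat h ys).mulVec mu =
      Sum.elim (fun j' => eval (Sum.elim xs ys) (pderiv (Sum.inr j') F)) (fun _ => 0) := by
    funext r
    cases r with
    | inl j =>
      simp only [Matrix.mulVec, dotProduct, Gmat, Matrix.of_apply, Sum.elim_inl, hmg j]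
      exact Finset.sum_congr rfl fun i _ => mul_comm _ _
    | inr i' =>
      simp only [Matrix.mulVec, dotProduct, Gmat, Matrix.of_apply, Sum.elim_inr]
      rw [Finset.sum_eq_single i']
      · simpa [mul_comm] using hmuh i'
      · intro b _ hb
        simp [Ne.symm hb]
      · simp
  have key1 : ∀ i, lam i = eval (Sum.elim xs ys) (lagX G1 F i) := by
    intro i
    calc lam i = ((1 : Matrix (Fin l1) (Fin l1) ℝ).mulVec lam) i := by
          rw [Matrix.one_mulVec]
      _ = (((Matrix.of fun i j => eval xs (G1 i j)) * Gmat g xs).mulVec lam) i := by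
          rw [hG1]
      _ = ((Matrix.of fun i j => eval xs (G1 i j)).mulVec ((Gmat g xs).mulVec lam)) i := by
          rw [Matrix.mulVec_mulVec]
      _ = eval (Sum.elim xs ys) (lagX G1 F i) := by
          rw [hwX]
          simp only [lagX, map_sum, eval_mul, eval_rename, Matrix.mulVec, dotProduct,
            Matrix.of_apply]
          rw [Fintype.sum_sum_type]
          simp [Function.comp]
  have key2 : ∀ j, mu j = eval (Sum.elim xs ys) (lagY H1 F j) := by
    intro j
    calc mu j = ((1 : Matrix (Fin l2) (Fin l2) ℝ).mulVec mu) j := by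
          rw [Matrix.one_mulVec]
      _ = (((Matrix.of fun i j => eval ys (H1 i j)) * Gmat h ys).mulVec mu) j := by
          rw [hH1]
      _ = ((Matrix.of fun i j => eval ys (H1 i j)).mulVec ((Gmat h ys).mulVec mu)) j := by
          rw [Matrix.mulVec_mulVec]
      _ = eval (Sum.elim xs ys) (lagY H1 F j) := by
          rw [hwY]
          simp only [lagY, map_sum, eval_mul, eval_rename, Matrix.mulVec, dotProduct,
            Matrix.of_apply]
          rw [Fintype.sum_sum_type]
          simp [Function.comp]
  refine ⟨key1, key2, hxX.1, hyY.1, ?_, ?_, ?_, ?_⟩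
  · intro j
    rw [hlg j]
    exact Finset.sum_congr rfl fun i _ => by rw [key1 i]
  · intro j'
    rw [hmg j']
    exact Finset.sum_congr rfl fun i _ => by rw [key2 i]
  · intro i hi
    exact ⟨(key1 i) ▸ (hlc i hi).1, (key1 i) ▸ (hlc i hi).2, hxX.2 i hi⟩
  · intro j hj
    exact ⟨(key2 j) ▸ (hmc j hj).1, (key2 j) ▸ (hmc j hj).2, hyY.2 j hj⟩
end

section
/- Let φ and ψ be tuples of real polynomials in N variables and F a real polynomial such that F attains only finitely many values c_1 < c_2 < ... < c_M on the real zero set V := {z ∈ ℝ^N : φ(z) = 0}. Suppose the problem min F(z) subject to φ(z) = 0, ψ(z) ≥ 0 is feasible with minimum value f* (so f* = c_ℓ for some ℓ) and has a finite set O of minimizers, each of which is an isolated point of the set {z ∈ ℝ^N : φ(z) = 0, F(z) = f*}. Then there exists a real polynomial q in N variables such that: (a) q(z) > 0 for every z feasible for the original problem (i.e. with φ(z) = 0, ψ(z) ≥ 0); (b) the minimum of F over the set {z : φ(z) = 0, q(z) ≥ 0} equals f*; and (c) the set of minimizers of F over {z : φ(z) = 0, q(z) ≥ 0} is exactly O.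 -/
open MvPolynomial

/-- If `F` attains only finitely many values on `V = {φ = 0}`, the problem
`min F s.t. φ = 0, ψ ≥ 0` has minimum value `f*` attained exactly on the finite set `O`
of minimizers, each of which is an isolated point of `{z : φ(z) = 0, F(z) = f*}`, then
there is a polynomial `q` such that: (a) `q > 0` on the feasible set; (b) the minimum
of `F` over `{φ = 0, q ≥ 0}` equals `f*`; (c) the set of minimizers of `F` over
`{φ = 0, q ≥ 0}` is exactly `O`. -/
theorem stmt10 (N r s : ℕ)
    (φ : Fin r → MvPolynomial (Fin N) ℝ) (ψ : Fin s → MvPolynomial (Fin N) ℝ)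
    (F : MvPolynomial (Fin N) ℝ) (fstar : ℝ) (O : Set (Fin N → ℝ))
    (hvals : {v : ℝ | ∃ z : Fin N → ℝ, (∀ i, eval z (φ i) = 0) ∧ eval z F = v}.Finite)
    (hfeas : {z : Fin N → ℝ | (∀ i, eval z (φ i) = 0) ∧ ∀ j, 0 ≤ eval z (ψ j)}.Nonempty)
    (hlb : ∀ z : Fin N → ℝ, ((∀ i, eval z (φ i) = 0) ∧ ∀ j, 0 ≤ eval z (ψ j)) →
      fstar ≤ eval z F)
    (hO : O = {z : Fin N → ℝ |
      ((∀ i, eval z (φ i) = 0) ∧ ∀ j, 0 ≤ eval z (ψ j)) ∧ eval z F = fstar})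
    (hOfin : O.Finite) (hOne : O.Nonempty)
    (hiso : ∀ u ∈ O, ∃ U : Set (Fin N → ℝ), IsOpen U ∧ u ∈ U ∧
      U ∩ {z : Fin N → ℝ | (∀ i, eval z (φ i) = 0) ∧ eval z F = fstar} = {u}) :
    ∃ q : MvPolynomial (Fin N) ℝ,
      (∀ z : Fin N → ℝ, ((∀ i, eval z (φ i) = 0) ∧ ∀ j, 0 ≤ eval z (ψ j)) →
        0 < eval z q) ∧
      (∀ z : Fin N → ℝ, (∀ i, eval z (φ i) = 0) → 0 ≤ eval z q → fstar ≤ eval z F) ∧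
      (∃ z : Fin N → ℝ, (∀ i, eval z (φ i) = 0) ∧ 0 ≤ eval z q ∧ eval z F = fstar) ∧
      {z : Fin N → ℝ | ((∀ i, eval z (φ i) = 0) ∧ 0 ≤ eval z q) ∧ eval z F = fstar} = O := by
  classical
  have hOmem : ∀ z, z ∈ O ↔
      ((∀ i, eval z (φ i) = 0) ∧ ∀ j, 0 ≤ eval z (ψ j)) ∧ eval z F = fstar := by
    intro z; rw [hO]; exact Iff.rfl
  obtain ⟨u0, hu0⟩ := hOne
  have hu0' := (hOmem u0).1 hu0
  set SF : Finset ℝ := hvals.toFinset with hSF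
  have hmemSF : ∀ z : Fin N → ℝ, (∀ i, eval z (φ i) = 0) → eval z F ∈ SF := by
    intro z hz
    simp only [hSF, Set.Finite.mem_toFinset, Set.mem_setOf_eq]
    exact ⟨z, hz, rfl⟩
  set Sgt : Finset ℝ := SF.filter (fun c => fstar < c) with hSgt
  set Sle : Finset ℝ := SF.filter (fun c => c ≤ fstar) with hSle
  set OF : Finset (Fin N → ℝ) := hOfin.toFinset with hOFdef
  have hmemOF : ∀ z, z ∈ OF ↔ z ∈ O := fun z => Set.Finite.mem_toFinset _
  -- value functions
  set g : ℝ → ℝ := fun t => ∏ c ∈ Sgt, (t - c) ^ 2 with hgdef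
  set dF : (Fin N → ℝ) → ℝ := fun z => ∏ u ∈ OF, (∑ j, (z j - u j) ^ 2) with hdFdef
  -- the polynomial P
  set P : MvPolynomial (Fin N) ℝ :=
    (∏ c ∈ Sgt, (F - C c) ^ 2) * ∏ u ∈ OF, (∑ j, (X j - C (u j)) ^ 2) with hPdef
  have hevalP : ∀ z, eval z P = g (eval z F) * dF z := by
    intro z
    simp [hPdef, hgdef, hdFdef, map_prod, map_sum]
  -- basic facts about g and dF
  have hg_nonneg : ∀ t, 0 ≤ g t := fun t => Finset.prod_nonneg fun c _ => sq_nonneg _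
  have hg_pos : ∀ t, t ≤ fstar → 0 < g t := by
    intro t ht
    refine Finset.prod_pos fun c hc => ?_
    have hc' : fstar < c := (Finset.mem_filter.1 hc).2
    have h0 : t - c ≠ 0 := by
      intro h; have := sub_eq_zero.1 h; linarith
    positivity
  have hg_zero : ∀ z : Fin N → ℝ, (∀ i, eval z (φ i) = 0) → fstar < eval z F →
      g (eval z F) = 0 := by
    intro z hz hlt
    refine Finset.prod_eq_zero (Finset.mem_filter.2 ⟨hmemSF z hz, hlt⟩) ?_
    simp
  have hdF_nonneg : ∀ z, 0 ≤ dF z :=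
    fun z => Finset.prod_nonneg fun u _ => Finset.sum_nonneg fun j _ => sq_nonneg _
  have hdF_zero : ∀ z ∈ O, dF z = 0 := by
    intro z hz
    refine Finset.prod_eq_zero ((hmemOF z).2 hz) ?_
    simp
  have hdF_mem : ∀ z, dF z = 0 → z ∈ O := by
    intro z hz
    obtain ⟨u, hu, huz⟩ := Finset.prod_eq_zero_iff.1 hz
    have hj : ∀ j ∈ Finset.univ, (z j - u j) ^ 2 = 0 :=
      (Finset.sum_eq_zero_iff_of_nonneg (fun j _ => sq_nonneg _)).1 huz
    have hz_eq : z = u := by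
      funext j
      have h1 := hj j (Finset.mem_univ j)
      have h2 := pow_eq_zero_iff (n := 2) (by norm_num) |>.1 h1
      have := sub_eq_zero.1 h2
      linarith
    rw [hz_eq]; exact (hmemOF u).1 hu
  -- lower bound m for g on attained values ≤ fstar
  have hSle_ne : Sle.Nonempty :=
    ⟨fstar, Finset.mem_filter.2 ⟨hu0'.2 ▸ hmemSF u0 hu0'.1.1, le_refl _⟩⟩
  set m : ℝ := Sle.inf' hSle_ne g with hmdef
  have hm_pos : 0 < m := by
    rw [hmdef, Finset.lt_inf'_iff]
    exact fun c hc => hg_pos c (Finset.mem_filter.1 hc).2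
  have hm_le : ∀ z : Fin N → ℝ, (∀ i, eval z (φ i) = 0) → eval z F ≤ fstar →
      m ≤ g (eval z F) := by
    intro z hz hle
    refine Finset.inf'_le g ?_
    simp only [hSle, Finset.mem_filter]
    exact ⟨hmemSF z hz, hle⟩
  -- the bad set
  set Bad : Set (Fin N → ℝ) :=
    {z | (∀ i, eval z (φ i) = 0) ∧ eval z F ≤ fstar ∧ z ∉ O} with hBaddef
  -- level sets are closed
  have hlevel_closed : ∀ v : ℝ,
      IsClosed {z : Fin N → ℝ | (∀ i, eval z (φ i) = 0) ∧ eval z F = v} := by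
    intro v
    have heq : {z : Fin N → ℝ | (∀ i, eval z (φ i) = 0) ∧ eval z F = v} =
        (⋂ i, {z : Fin N → ℝ | eval z (φ i) = 0}) ∩ {z | eval z F = v} := by
      ext z; simp [Set.mem_iInter]
    rw [heq]
    exact (isClosed_iInter fun i =>
      isClosed_eq ((φ i).continuous_eval) continuous_const).inter
      (isClosed_eq F.continuous_eval continuous_const)
  -- Bad is closed
  have hBad_closed : IsClosed Bad := by
    choose U hUopen hUmem hUeq using hiso
    set Uall : Set (Fin N → ℝ) := ⋃ (u : Fin N → ℝ) (h : u ∈ O), U u h with hUalldef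
    have hUall_open : IsOpen Uall := isOpen_iUnion fun u => isOpen_iUnion fun h => hUopen u h
    set Slt : Finset ℝ := SF.filter (fun c => c < fstar) with hSlt
    set W : Set (Fin N → ℝ) := {z | (∀ i, eval z (φ i) = 0) ∧ eval z F = fstar} with hWdef
    have hBadeq : Bad =
        (⋃ v ∈ (Slt : Set ℝ), {z : Fin N → ℝ | (∀ i, eval z (φ i) = 0) ∧ eval z F = v})
          ∪ (W \ Uall) := by
      ext z
      constructor
      · rintro ⟨hφz, hle, hzO⟩
        rcases lt_or_eq_of_le hle with hlt | heq
        · left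
          refine Set.mem_biUnion ?_ ⟨hφz, rfl⟩
          simp only [hSlt, Finset.mem_coe, Finset.coe_filter, Set.mem_setOf_eq]
          exact ⟨hmemSF z hφz, hlt⟩
        · right
          refine ⟨⟨hφz, heq⟩, ?_⟩
          intro hzU
          obtain ⟨u, hu, hzu⟩ := Set.mem_iUnion₂.1 hzU
          have : z ∈ U u hu ∩ W := ⟨hzu, hφz, heq⟩
          rw [hWdef] at this
          rw [hUeq u hu] at this
          exact hzO (this ▸ hu)
      · rintro (hz | hz)
        · obtain ⟨v, hv, hφz, hFz⟩ := Set.mem_iUnion₂.1 hz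
          simp only [hSlt, Finset.mem_coe, Finset.coe_filter, Set.mem_setOf_eq] at hv
          refine ⟨hφz, by rw [hFz]; exact le_of_lt hv.2, ?_⟩
          intro hzO
          have := ((hOmem z).1 hzO).2
          rw [hFz] at this
          exact absurd this (ne_of_lt hv.2)
        · obtain ⟨⟨hφz, hFz⟩, hzU⟩ := hz
          refine ⟨hφz, le_of_eq hFz, ?_⟩
          intro hzO
          exact hzU (Set.mem_iUnion.2 ⟨z, Set.mem_iUnion.2 ⟨hzO, hUmem z hzO⟩⟩)
    rw [hBadeq]
    refine IsClosed.union ?_ ?_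
    · exact Set.Finite.isClosed_biUnion (Slt.finite_toSet) fun v _ => hlevel_closed v
    · exact (hlevel_closed fstar).inter hUall_open.isClosed_compl
  -- coercivity radius
  set R : ℝ := 1 + ∑ u ∈ OF, ∑ j, |u j| with hRdef
  have hsum_nonneg : (0:ℝ) ≤ ∑ u ∈ OF, ∑ j, |u j| :=
    Finset.sum_nonneg fun u _ => Finset.sum_nonneg fun j _ => abs_nonneg _
  have hRu : ∀ u ∈ OF, ∀ j, |u j| + 1 ≤ R := by
    intro u hu j
    have h1 : |u j| ≤ ∑ k, |u k| :=
      Finset.single_le_sum (f := fun k => |u k|) (fun k _ => abs_nonneg _) (Finset.mem_univ j)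
    have h2 : (∑ j, |u j|) ≤ ∑ u ∈ OF, ∑ j, |u j| :=
      Finset.single_le_sum (f := fun u => ∑ j, |u j|)
        (fun u _ => Finset.sum_nonneg fun j _ => abs_nonneg _) hu
    rw [hRdef]; linarith
  set Box : Set (Fin N → ℝ) := Set.univ.pi (fun _ : Fin N => Set.Icc (-R) R) with hBoxdef
  have hcoer : ∀ z : Fin N → ℝ, z ∉ Box → 1 ≤ dF z := by
    intro z hz
    have : ∃ j, z j ∉ Set.Icc (-R) R := by
      by_contra h
      push_neg at h
      exact hz fun j _ => h j
    obtain ⟨j, hj⟩ := this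
    have hzj : R < |z j| := by
      rcases abs_cases (z j) with ⟨h1, h2⟩ | ⟨h1, h2⟩ <;>
        simp only [Set.mem_Icc, not_and_or, not_le] at hj <;> rcases hj with h | h <;> linarith
    simp only [hdFdef]
    rw [show (1:ℝ) = ∏ _u ∈ OF, (1:ℝ) from (Finset.prod_const_one).symm]
    refine Finset.prod_le_prod (fun u _ => zero_le_one) fun u hu => ?_
    have haux : 1 ≤ (z j - u j) ^ 2 := by
      have h1 := hRu u hu j
      have h2 : |z j| - |u j| ≤ |z j - u j| := abs_sub_abs_le_abs_sub _ _
      have h3 : |z j - u j| ^ 2 = (z j - u j) ^ 2 := sq_abs _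
      nlinarith [abs_nonneg (z j - u j), abs_nonneg (u j)]
    calc (1:ℝ) ≤ (z j - u j) ^ 2 := haux
      _ ≤ ∑ j', (z j' - u j') ^ 2 :=
        Finset.single_le_sum (f := fun j' => (z j' - u j') ^ 2)
          (fun j' _ => sq_nonneg _) (Finset.mem_univ j)
  -- continuity of dF
  have hdF_cont : Continuous dF :=
    continuous_finset_prod _ fun u _ => continuous_finset_sum _ fun j _ =>
      ((continuous_apply j).sub continuous_const).pow 2
  -- uniform positive lower bound for dF on Bad
  obtain ⟨δ, hδpos, hδ⟩ : ∃ δ : ℝ, 0 < δ ∧ ∀ z ∈ Bad, δ ≤ dF z := by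
    have hKco : IsCompact (Bad ∩ Box) :=
      (isCompact_univ_pi fun _ => isCompact_Icc).inter_left hBad_closed
    by_cases hK : (Bad ∩ Box).Nonempty
    · obtain ⟨z0, hz0K, hz0min⟩ := hKco.exists_isMinOn hK hdF_cont.continuousOn
      have hz0pos : 0 < dF z0 :=
        lt_of_le_of_ne (hdF_nonneg z0) fun h => hz0K.1.2.2 (hdF_mem z0 h.symm)
      refine ⟨min 1 (dF z0), lt_min one_pos hz0pos, fun z hz => ?_⟩
      by_cases hzB : z ∈ Box
      · exact le_trans (min_le_right _ _) ((isMinOn_iff.1 hz0min) z ⟨hz, hzB⟩)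
      · exact le_trans (min_le_left _ _) (hcoer z hzB)
    · refine ⟨1, one_pos, fun z hz => ?_⟩
      by_cases hzB : z ∈ Box
      · exact absurd ⟨z, hz, hzB⟩ hK
      · exact hcoer z hzB
  -- lower bound for P on Bad
  have hBadlb : ∀ z ∈ Bad, m * δ ≤ eval z P := by
    intro z hz
    rw [hevalP]
    exact mul_le_mul (hm_le z hz.1 hz.2.1) (hδ z hz) (le_of_lt hδpos) (hg_nonneg _)
  -- the polynomial q
  set ε : ℝ := m * δ / 2 with hεdef
  have hεpos : 0 < ε := by positivity
  have hεlt : ε < m * δ := by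
    rw [hεdef]; nlinarith
  refine ⟨C ε - P, ?_, ?_, ?_, ?_⟩
  · -- (a) q > 0 on the feasible set
    rintro z ⟨hφz, hψz⟩
    have hP0 : eval z P = 0 := by
      rcases eq_or_lt_of_le (hlb z ⟨hφz, hψz⟩) with heq | hlt
      · rw [hevalP, hdF_zero z ((hOmem z).2 ⟨⟨hφz, hψz⟩, heq.symm⟩), mul_zero]
      · rw [hevalP, hg_zero z hφz hlt, zero_mul]
    simp only [map_sub, eval_C, hP0, sub_zero]
    exact hεpos
  · -- (b) fstar is a lower bound on the new feasible set
    intro z hφz hq0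
    by_contra hcon
    push_neg at hcon
    have hzBad : z ∈ Bad := by
      refine ⟨hφz, le_of_lt hcon, fun hzO => ?_⟩
      have := ((hOmem z).1 hzO).2
      linarith
    have h1 := hBadlb z hzBad
    simp only [map_sub, eval_C, sub_nonneg] at hq0
    linarith
  · -- (c) existence: u0 is feasible for the new problem
    refine ⟨u0, hu0'.1.1, ?_, hu0'.2⟩
    have hP0 : eval u0 P = 0 := by
      rw [hevalP, hdF_zero u0 hu0, mul_zero]
    simp only [map_sub, eval_C, hP0, sub_zero]
    exact le_of_lt hεpos
  · -- (c) minimizer set equality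
    ext z
    simp only [Set.mem_setOf_eq]
    constructor
    · rintro ⟨⟨hφz, hq0⟩, hFz⟩
      by_contra hzO
      have hzBad : z ∈ Bad := ⟨hφz, le_of_eq hFz, hzO⟩
      have h1 := hBadlb z hzBad
      simp only [map_sub, eval_C, sub_nonneg] at hq0
      linarith
    · intro hzO
      obtain ⟨⟨hφz, hψz⟩, hFz⟩ := (hOmem z).1 hzO
      have hP0 : eval z P = 0 := by
        rw [hevalP, hdF_zero z hzO, mul_zero]
      refine ⟨⟨hφz, ?_⟩, hFz⟩
      simp only [map_sub, eval_C, hP0, sub_zero]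
      exact le_of_lt hεpos
end
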